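/- Let E(D,t) = Q_0(t)D^m - Q_1(t)D^{m-1} - ... - Q_m(t) with r'_m = deg Q_m ≥ 0, deg Q_0 = r'_m + 1, and deg Q_j ≤ r'_m for 1 ≤ j ≤ m. Rewriting E in the variable z = 1/t and θ = z d/dz, the Newton polygon of E at z = 0 has the unique slope (m-1)/m = 1 - 1/m, and all intermediate vertices (i, -r'_{m-i}+i) for 0 < i < m lie strictly above the segment joining (0, -(S'-1)) to (m, -S'+m), where S' = deg Q_0. -/

import Mathlib

open Polynomial

/-- **Appendix §3, case of Condition (290).** Let
`E(D,t) = Q₀(t)D^m - Q₁(t)D^{m-1} - … - Q_m(t)` with `r'_m = deg Q_m ≥ 0`,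
`deg Q₀ = r'_m + 1 (= S')` and `deg Q_j ≤ r'_m` for `1 ≤ j ≤ m`. Rewriting `E` in the
variable `z = 1/t` and `θ = z d/dz`, with `v(ã_i) = -deg Q_{m-i} + i`, the Newton polygon
of `E` at `z = 0` is the region above the single line of slope `(m-1)/m = 1 - 1/m` joining
`(0, -(S'-1))` to `(m, -S'+m)`, and all intermediate vertices `(i, -deg Q_{m-i} + i)` for
`0 < i < m` lie strictly above that line. -/
theorem stmt16 (K : Type*) [Field K] [CharZero K]
    (m : ℕ) (hm : 2 ≤ m)
    (Q : ℕ → Polynomial K)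
    (hQm0 : Q m ≠ 0)  -- r'_m = deg Q_m ≥ 0
    (hQ0 : (Q 0).degree = (Q m).degree + 1)
    (hQj : ∀ j : ℕ, 1 ≤ j → j ≤ m → (Q j).degree ≤ (Q m).degree) :
    convexHull ℝ
        (⋃ i ∈ Finset.range (m + 1), {p : ℝ × ℝ | 0 ≤ p.1 ∧ p.1 ≤ (i : ℝ) ∧
          Q (m - i) ≠ 0 ∧ -(((Q (m - i)).natDegree : ℝ)) + (i : ℝ) ≤ p.2}) =
      {p : ℝ × ℝ | 0 ≤ p.1 ∧ p.1 ≤ (m : ℝ) ∧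
        -(((Q 0).natDegree : ℝ)) + 1 + p.1 * ((m : ℝ) - 1) / (m : ℝ) ≤ p.2} ∧
    ∀ i : ℕ, 0 < i → i < m → Q (m - i) ≠ 0 →
      -(((Q (m - i)).natDegree : ℝ)) + (i : ℝ) >
        -(((Q 0).natDegree : ℝ)) + 1 + (i : ℝ) * ((m : ℝ) - 1) / (m : ℝ) := by
  have hmpos : 0 < m := by omega
  have hmR : (0:ℝ) < (m:ℝ) := by exact_mod_cast hmpos
  have hm2R : (2:ℝ) ≤ (m:ℝ) := by exact_mod_cast hm
  have hd0 : (Q 0).natDegree = (Q m).natDegree + 1 := by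
    apply natDegree_eq_of_degree_eq_some
    rw [hQ0, degree_eq_natDegree hQm0]
    push_cast
    rfl
  have hQ0ne : Q 0 ≠ 0 := by
    intro h
    have hd0' := hd0
    rw [h, natDegree_zero] at hd0'
    omega
  have hdle : ∀ i : ℕ, i < m → (Q (m - i)).natDegree ≤ (Q m).natDegree := by
    intro i him
    rcases Nat.eq_zero_or_pos i with h | h
    · subst h; simp
    · exact natDegree_le_natDegree (hQj (m - i) (by omega) (by omega))
  have hline : -(((Q 0).natDegree : ℝ)) + 1 = -(((Q m).natDegree : ℝ)) := by
    rw [hd0]; push_cast; ring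
  constructor
  · apply Set.Subset.antisymm
    · apply convexHull_min
      · -- union ⊆ R
        intro p hp
        simp only [Set.mem_iUnion, Set.mem_setOf_eq, Finset.mem_range] at hp
        obtain ⟨i, hi, hx0, hxi, hne, hy⟩ := hp
        have him : i ≤ m := Nat.lt_succ_iff.mp hi
        have hiR : (i:ℝ) ≤ (m:ℝ) := by exact_mod_cast him
        refine ⟨hx0, le_trans hxi hiR, ?_⟩
        rw [hline]
        by_cases hcase : i = m
        · subst hcase
          have hdd : (Q (i - i)).natDegree = (Q i).natDegree + 1 := by
            rw [Nat.sub_self]; exact hd0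
          rw [hdd] at hy
          push_cast at hy
          have h1 : p.1 * ((i:ℝ)-1)/(i:ℝ) ≤ (i:ℝ) - 1 := by
            rw [div_le_iff₀ hmR]
            nlinarith [le_trans hxi hiR]
          linarith
        · have hlt : i < m := lt_of_le_of_ne him hcase
          have hd : ((Q (m - i)).natDegree : ℝ) ≤ ((Q m).natDegree : ℝ) := by
            exact_mod_cast hdle i hlt
          have h1 : p.1 * ((m:ℝ)-1)/(m:ℝ) ≤ (i:ℝ) := by
            rw [div_le_iff₀ hmR]
            nlinarith [hx0, hxi]
          linarith
      · -- R is convex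
        intro p hp q hq a b ha hb hab
        simp only [Set.mem_setOf_eq] at hp hq ⊢
        obtain ⟨hp1, hp2, hp3⟩ := hp
        obtain ⟨hq1, hq2, hq3⟩ := hq
        simp only [Prod.fst_add, Prod.snd_add, Prod.smul_fst, Prod.smul_snd, smul_eq_mul]
        refine ⟨by nlinarith, by nlinarith, ?_⟩
        have h1 := mul_le_mul_of_nonneg_left hp3 ha
        have h2 := mul_le_mul_of_nonneg_left hq3 hb
        have hexp : ∀ x : ℝ, x * ((m:ℝ)-1) / (m:ℝ) = x * (((m:ℝ)-1)/(m:ℝ)) := fun x => by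
          rw [mul_div_assoc]
        rw [hexp] at h1 h2 ⊢
        have hb' : b = 1 - a := by linarith
        subst hb'
        nlinarith [h1, h2]
    · -- R ⊆ hull
      intro p hp
      obtain ⟨hx0, hxm, hy⟩ := hp
      rw [hline] at hy
      by_cases hc : -(((Q m).natDegree : ℝ)) + ((m:ℝ) - 1) ≤ p.2
      · apply subset_convexHull
        refine Set.mem_biUnion (Finset.self_mem_range_succ m) ?_
        refine ⟨hx0, hxm, by simpa using hQ0ne, ?_⟩
        have hdd : (Q (m - m)).natDegree = (Q m).natDegree + 1 := by
          rw [Nat.sub_self]; exact hd0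
        rw [hdd]
        push_cast
        linarith
      · push_neg at hc
        set t : ℝ := p.1 / m with hts
        have ht0 : 0 ≤ t := div_nonneg hx0 hmR.le
        have htm : t * m = p.1 := div_mul_cancel₀ _ hmR.ne'
        have hxlt : p.1 < m := by
          by_contra h
          push_neg at h
          have hx : p.1 = m := le_antisymm hxm h
          rw [hx] at hy
          have he : (m:ℝ) * ((m:ℝ)-1)/(m:ℝ) = (m:ℝ)-1 := by
            field_simp
          rw [he] at hy
          linarith
        have ht1 : t < 1 := (div_lt_one hmR).mpr hxlt
        have hy' : -(((Q m).natDegree : ℝ)) + t * ((m:ℝ)-1) ≤ p.2 := by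
          have : p.1 * ((m:ℝ)-1)/(m:ℝ) = t * ((m:ℝ)-1) := by
            rw [hts]; ring
          linarith [hy, this ▸ hy]
        set A : ℝ := (p.2 - t * ((m:ℝ) - 1 - ((Q m).natDegree : ℝ))) / (1 - t) with hA
        have hAge : -(((Q m).natDegree : ℝ)) ≤ A := by
          rw [hA, le_div_iff₀ (by linarith : (0:ℝ) < 1 - t)]
          nlinarith [hy']
        have hmem0 : ((0:ℝ), A) ∈
            (⋃ i ∈ Finset.range (m + 1), {p : ℝ × ℝ | 0 ≤ p.1 ∧ p.1 ≤ (i : ℝ) ∧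
              Q (m - i) ≠ 0 ∧ -(((Q (m - i)).natDegree : ℝ)) + (i : ℝ) ≤ p.2}) := by
          have h0 : (0:ℕ) ∈ Finset.range (m + 1) := Finset.mem_range.mpr (by omega)
          exact Set.mem_biUnion h0
            ⟨le_refl 0, by norm_num, by simpa using hQm0, by simpa using hAge⟩
        have hmemm : (((m:ℝ)), (m:ℝ) - 1 - ((Q m).natDegree : ℝ)) ∈
            (⋃ i ∈ Finset.range (m + 1), {p : ℝ × ℝ | 0 ≤ p.1 ∧ p.1 ≤ (i : ℝ) ∧
              Q (m - i) ≠ 0 ∧ -(((Q (m - i)).natDegree : ℝ)) + (i : ℝ) ≤ p.2}) := by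
          refine Set.mem_biUnion (Finset.self_mem_range_succ m) ?_
          refine ⟨hmR.le, le_refl _, by simpa using hQ0ne, ?_⟩
          have hdd : (Q (m - m)).natDegree = (Q m).natDegree + 1 := by
            rw [Nat.sub_self]; exact hd0
          rw [hdd]
          push_cast
          linarith
        have hcomb := (convex_convexHull ℝ _)
          (subset_convexHull ℝ _ hmem0) (subset_convexHull ℝ _ hmemm)
          (by linarith : (0:ℝ) ≤ 1 - t) ht0 (by ring : (1 - t) + t = 1)
        have hpeq : p = (1-t) • ((0:ℝ), A) +
            t • (((m:ℝ)), (m:ℝ) - 1 - ((Q m).natDegree : ℝ)) := by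
          have h1t : (1:ℝ) - t ≠ 0 := by linarith
          refine Prod.ext ?_ ?_
          · show p.1 = _
            simp only [Prod.fst_add, Prod.smul_fst, smul_eq_mul]
            rw [mul_zero, zero_add, htm]
          · simp only [Prod.snd_add, Prod.smul_snd, smul_eq_mul]
            rw [hA]
            field_simp
            ring
        rw [hpeq]
        exact hcomb
  · -- strict inequalities
    intro i hi him hne
    have hd : ((Q (m - i)).natDegree : ℝ) ≤ ((Q m).natDegree : ℝ) := by
      exact_mod_cast hdle i him
    have hiR : (0:ℝ) < (i:ℝ) := by exact_mod_cast hi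
    rw [gt_iff_lt, hline]
    have h1 : (i:ℝ) * ((m:ℝ)-1)/(m:ℝ) < (i:ℝ) := by
      rw [div_lt_iff₀ hmR]
      nlinarith
    linarith
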